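/- For integers f_1 ≥ f_2 ≥ ⋯ ≥ f_n ≥ 0, the limit as x_1,...,x_n → x (with x ≠ 0) of the generalized Vandermonde determinant M_{f_1,...,f_n}(x_1,...,x_n) = det(x_j^{f_i + n - i})_{i,j=1}^n divided by the ordinary Vandermonde D(x_1,...,x_n) equals x^{f_1+⋯+f_n} · D(f_1+n-1, f_2+n-2, …, f_n) / D(n-1, n-2, …, 1, 0), where D applied to a tuple of numbers denotes the product of pairwise differences (earlier minus later). -/

import Mathlib

open Filter Matrix MvPolynomial Finset


/-- Product of pairwise non-associated primes dividing `m` divides `m`. -/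
theorem my_prod_primes_dvd {α ι : Type*} [CommMonoidWithZero α] [IsCancelMulZero α] [DecidableEq ι]
    (s : Finset ι) (g : ι → α) (m : α)
    (hp : ∀ i ∈ s, Prime (g i))
    (hna : ∀ i ∈ s, ∀ j ∈ s, i ≠ j → ¬ Associated (g i) (g j))
    (hd : ∀ i ∈ s, g i ∣ m) : (∏ i ∈ s, g i) ∣ m := by
  classical
  induction s using Finset.induction_on generalizing m with
  | empty => simp
  | @insert a s ha ih =>
    obtain ⟨k, rfl⟩ := hd a (Finset.mem_insert_self a s)
    rw [Finset.prod_insert ha]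
    refine mul_dvd_mul_left _ (ih k (fun i hi => hp i (Finset.mem_insert_of_mem hi))
      (fun i hi j hj hij => hna i (Finset.mem_insert_of_mem hi) j (Finset.mem_insert_of_mem hj) hij)
      (fun i hi => ?_))
    have hia : i ≠ a := by rintro rfl; exact ha hi
    have h1 : g i ∣ g a * k := hd i (Finset.mem_insert_of_mem hi)
    rcases (hp i (Finset.mem_insert_of_mem hi)).dvd_or_dvd h1 with h | h
    · exact absurd ((hp i (Finset.mem_insert_of_mem hi)).associated_of_dvd
        (hp a (Finset.mem_insert_self a s)) h)
        (hna i (Finset.mem_insert_of_mem hi) a (Finset.mem_insert_self a s) hia)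
    · exact h

/-- `d ∣ aeval g p - p` when `d ∣ g k - X k` for all `k`. -/
theorem dvd_aeval_sub {σ R : Type*} [CommRing R] {d : MvPolynomial σ R}
    {g : σ → MvPolynomial σ R} (hg : ∀ k, d ∣ g k - X k) (p : MvPolynomial σ R) :
    d ∣ aeval g p - p := by
  induction p using MvPolynomial.induction_on with
  | C a => simp
  | add p q hp hq =>
    have : aeval g (p + q) - (p + q) = (aeval g p - p) + (aeval g q - q) := by
      rw [_root_.map_add]; ring
    rw [this]; exact dvd_add hp hq
  | mul_X p k hp =>
    rw [_root_.map_mul, aeval_X]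
    have : aeval g p * g k - p * X k
        = aeval g p * (g k - X k) + (aeval g p - p) * X k := by ring
    rw [this]
    exact dvd_add (Dvd.dvd.mul_left (hg k) _) (hp.mul_right _)

theorem my_prime_X_sub_X {n : ℕ} {i j : Fin n} (h : j ≠ i) :
    Prime (MvPolynomial.X i - MvPolynomial.X j : MvPolynomial (Fin n) ℝ) := by
  classical
  let E := ((MvPolynomial.renameEquiv ℝ (Equiv.optionSubtypeNe i)).symm.trans
    (MvPolynomial.optionEquivLeft ℝ {b : Fin n // b ≠ i}))
  refine (MulEquiv.prime_iff E (p := MvPolynomial.X i - MvPolynomial.X j)).mp ?_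
  show Prime (E (MvPolynomial.X i - MvPolynomial.X j))
  have hE : E (MvPolynomial.X i - MvPolynomial.X j)
      = Polynomial.X - Polynomial.C (MvPolynomial.X ⟨j, h⟩) := by
    have h1 : E (MvPolynomial.X i) = Polynomial.X := by
      simp only [E, AlgEquiv.trans_apply, renameEquiv_symm, renameEquiv_apply, rename_X,
        Equiv.optionSubtypeNe_symm_self, optionEquivLeft_X_none]
    have h2 : E (MvPolynomial.X j) = Polynomial.C (MvPolynomial.X ⟨j, h⟩) := by
      simp only [E, AlgEquiv.trans_apply, renameEquiv_symm, renameEquiv_apply, rename_X,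
        Equiv.optionSubtypeNe_symm_of_ne h, optionEquivLeft_X_some]
    rw [map_sub, h1, h2]
  rw [hE]
  exact Polynomial.prime_X_sub_C _

theorem my_not_assoc {n : ℕ} {p q : Fin n × Fin n} (hp : p.1 < p.2) (hq : q.1 < q.2)
    (hpq : p ≠ q) :
    ¬ Associated (MvPolynomial.X p.1 - MvPolynomial.X p.2 : MvPolynomial (Fin n) ℝ)
      (MvPolynomial.X q.1 - MvPolynomial.X q.2) := by
  classical
  rintro ⟨u, hu⟩
  -- evaluate at y with y p.1 = y p.2 but y q.1 ≠ y q.2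
  set y : Fin n → ℝ := fun m => if m = p.2 then (p.1 : ℝ) else (m : ℝ) with hy
  have hyq : y q.1 ≠ y q.2 := by
    have hcast : ∀ a b : Fin n, a ≠ b → (a : ℝ) ≠ (b : ℝ) := fun a b hab => by
      exact_mod_cast fun hc => hab (Fin.ext (by exact_mod_cast hc))
    by_cases h1 : q.1 = p.2 <;> by_cases h2 : q.2 = p.2
    · exact absurd (h1.trans h2.symm) hq.ne
    · simp only [hy, if_pos h1, if_neg h2]
      refine hcast _ _ (lt_trans (h1 ▸ hp) hq).ne
    · simp only [hy, if_neg h1, if_pos h2]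
      exact hcast _ _ (fun hd => hpq (Prod.ext hd h2).symm)
    · simp only [hy, if_neg h1, if_neg h2]
      exact hcast _ _ hq.ne
  have := congrArg (MvPolynomial.eval y) hu
  simp only [_root_.map_mul, map_sub, MvPolynomial.eval_X] at this
  have hz : y p.1 - y p.2 = 0 := by
    simp only [hy, if_pos rfl, if_neg hp.ne, sub_eq_zero]
  rw [hz, zero_mul] at this
  exact hyq (sub_eq_zero.mp this.symm)

theorem my_pairs_prod {M : Type*} [CommMonoid M] {n : ℕ} (g : Fin n → Fin n → M) :
    ∏ p ∈ Finset.univ.filter (fun p : Fin n × Fin n => p.1 < p.2), g p.1 p.2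
      = ∏ i, ∏ j ∈ Finset.Ioi i, g i j := by
  rw [Finset.prod_filter, ← Finset.univ_product_univ, Finset.prod_product]
  refine Finset.prod_congr rfl fun i _ => ?_
  rw [← Finset.filter_lt_eq_Ioi, Finset.prod_filter]

theorem my_tendsto_pair (a b c d : ℕ) (x : ℝ) (hx : x ≠ 0) (hcd : (c : ℝ) ≠ (d : ℝ)) :
    Tendsto (fun t : ℝ => (t ^ a - t ^ b) / (x * t ^ c - x * t ^ d))
      (nhdsWithin 1 {t : ℝ | t ≠ 1})
      (nhds (((a : ℝ) - b) / (x * (c : ℝ) - x * d))) := by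
  have hg1 : HasDerivAt (fun t : ℝ => t ^ a - t ^ b) ((a : ℝ) - b) 1 := by
    simpa using (hasDerivAt_pow a (1 : ℝ)).fun_sub (hasDerivAt_pow b (1 : ℝ))
  have hg2 : HasDerivAt (fun t : ℝ => x * t ^ c - x * t ^ d) (x * c - x * d) 1 := by
    simpa using ((hasDerivAt_pow c (1 : ℝ)).const_mul x).fun_sub
      ((hasDerivAt_pow d (1 : ℝ)).const_mul x)
  have h1 := hasDerivAt_iff_tendsto_slope.mp hg1
  have h2 := hasDerivAt_iff_tendsto_slope.mp hg2
  have hne : x * (c : ℝ) - x * d ≠ 0 := by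
    rw [sub_ne_zero]
    exact fun hc => hcd (mul_left_cancel₀ hx hc)
  refine ((h1.div h2 hne).congr' ?_)
  filter_upwards [eventually_mem_nhdsWithin] with t ht
  have ht1 : t - 1 ≠ 0 := sub_ne_zero.mpr ht
  simp only [Pi.div_apply, slope_def_field, one_pow, mul_one, sub_self, sub_zero]
  rw [div_div_div_cancel_right₀ ht1]

theorem key_dvd {n : ℕ} (e : Fin n → ℕ) :
    (∏ p ∈ Finset.univ.filter (fun p : Fin n × Fin n => p.1 < p.2),
       (MvPolynomial.X p.1 - MvPolynomial.X p.2 : MvPolynomial (Fin n) ℝ))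
    ∣ Matrix.det (Matrix.of fun i j : Fin n =>
        (MvPolynomial.X j : MvPolynomial (Fin n) ℝ) ^ (e i)) := by
  classical
  set P := Matrix.det (Matrix.of fun i j : Fin n =>
      (MvPolynomial.X j : MvPolynomial (Fin n) ℝ) ^ (e i)) with hP
  apply my_prod_primes_dvd
  · exact fun p hp => my_prime_X_sub_X (Finset.mem_filter.1 hp).2.ne'
  · exact fun p hp q hq hpq =>
      my_not_assoc (Finset.mem_filter.1 hp).2 (Finset.mem_filter.1 hq).2 hpq
  · intro p hp
    obtain hlt := (Finset.mem_filter.1 hp).2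
    set g : Fin n → MvPolynomial (Fin n) ℝ :=
      Function.update MvPolynomial.X p.1 (MvPolynomial.X p.2) with hgdef
    have hg : ∀ k, (MvPolynomial.X p.1 - MvPolynomial.X p.2 : MvPolynomial (Fin n) ℝ)
        ∣ g k - MvPolynomial.X k := by
      intro k
      by_cases hk : k = p.1
      · subst hk
        simp only [hgdef, Function.update_self]
        exact ⟨-1, by ring⟩
      · simp only [hgdef, Function.update_of_ne hk, sub_self, dvd_zero]
    have h0 : MvPolynomial.aeval g P = 0 := by
      rw [hP, AlgHom.map_det]
      apply Matrix.det_zero_of_column_eq hlt.ne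
      intro k
      simp only [AlgHom.mapMatrix_apply, Matrix.map_apply, Matrix.of_apply, map_pow, aeval_X,
        hgdef, Function.update_self, Function.update_of_ne hlt.ne']
    have h1 := dvd_aeval_sub hg P
    rw [h0, zero_sub] at h1
    exact dvd_neg.mp h1

/-- The limit of the generalized Vandermonde determinant `M_{f₁,…,fₙ}` divided by the
ordinary Vandermonde, as all points tend to `x ≠ 0`, equals
`x^(f₁+⋯+fₙ) · D(f₁+n-1,…,fₙ) / D(n-1,…,0)`. -/
theorem stmt1 (n : ℕ) (hn : 2 ≤ n) (f : Fin n → ℕ) (hf : Antitone f) (x : ℝ) (hx : x ≠ 0) :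
    Tendsto
      (fun y : Fin n → ℝ =>
        (Matrix.det (Matrix.of fun i j : Fin n => y j ^ (f i + (n - 1 - (i : ℕ))))) /
          ∏ p ∈ Finset.univ.filter (fun p : Fin n × Fin n => p.1 < p.2), (y p.1 - y p.2))
      (nhdsWithin (fun _ => x) {y : Fin n → ℝ | Function.Injective y})
      (nhds (x ^ (∑ i, f i) *
        (∏ p ∈ Finset.univ.filter (fun p : Fin n × Fin n => p.1 < p.2),
          (((f p.1 + (n - 1 - (p.1 : ℕ)) : ℕ) : ℝ) - ((f p.2 + (n - 1 - (p.2 : ℕ)) : ℕ) : ℝ))) /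
        (∏ p ∈ Finset.univ.filter (fun p : Fin n × Fin n => p.1 < p.2),
          (((n - 1 - (p.1 : ℕ) : ℕ) : ℝ) - ((n - 1 - (p.2 : ℕ) : ℕ) : ℝ))))) := by
  classical
  set e : Fin n → ℕ := fun i => f i + (n - 1 - (i : ℕ)) with he
  obtain ⟨Q, hQ⟩ := key_dvd e
  set G : (Fin n → ℝ) → ℝ := fun y => MvPolynomial.eval y Q with hG
  have hGc : Continuous G := MvPolynomial.continuous_eval Q
  -- evaluation identities
  have hPe : ∀ y : Fin n → ℝ,
      Matrix.det (Matrix.of fun i j : Fin n => y j ^ (e i))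
        = MvPolynomial.eval y
          (Matrix.det (Matrix.of fun i j : Fin n =>
            (MvPolynomial.X j : MvPolynomial (Fin n) ℝ) ^ (e i))) := by
    intro y
    rw [RingHom.map_det]
    congr 1
    ext i j
    simp
  have hVe : ∀ y : Fin n → ℝ,
      MvPolynomial.eval y (∏ p ∈ Finset.univ.filter (fun p : Fin n × Fin n => p.1 < p.2),
          (MvPolynomial.X p.1 - MvPolynomial.X p.2 : MvPolynomial (Fin n) ℝ))
        = ∏ p ∈ Finset.univ.filter (fun p : Fin n × Fin n => p.1 < p.2), (y p.1 - y p.2) := by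
    intro y
    rw [map_prod]
    simp
  have hVne : ∀ y : Fin n → ℝ, Function.Injective y →
      (∏ p ∈ Finset.univ.filter (fun p : Fin n × Fin n => p.1 < p.2), (y p.1 - y p.2)) ≠ 0 := by
    intro y hy
    rw [Finset.prod_ne_zero_iff]
    intro p hp
    exact sub_ne_zero.mpr (fun hc => (Finset.mem_filter.1 hp).2.ne (hy hc))
  -- on injective points, the quotient equals G
  have hFeqG : ∀ y : Fin n → ℝ, Function.Injective y →
      (Matrix.det (Matrix.of fun i j : Fin n => y j ^ (f i + (n - 1 - (i : ℕ))))) /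
          (∏ p ∈ Finset.univ.filter (fun p : Fin n × Fin n => p.1 < p.2), (y p.1 - y p.2))
        = G y := by
    intro y hy
    have h1 : Matrix.det (Matrix.of fun i j : Fin n => y j ^ (f i + (n - 1 - (i : ℕ))))
        = (∏ p ∈ Finset.univ.filter (fun p : Fin n × Fin n => p.1 < p.2), (y p.1 - y p.2)) * G y := by
      rw [show (fun i j : Fin n => y j ^ (f i + (n - 1 - (i : ℕ)))) = fun i j => y j ^ e i from rfl,
        hPe y, hQ, _root_.map_mul, hVe y, hG]
    rw [h1, mul_div_cancel_left₀ _ (hVne y hy)]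
  have hef : ∀ i : Fin n, f i + (n - 1 - (i : ℕ)) = e i := fun i => rfl
  -- the curve t ↦ (x * t^j)
  set γ : ℝ → (Fin n → ℝ) := fun t j => x * t ^ (j : ℕ) with hγ
  have hγc : Continuous γ := continuous_pi fun j => continuous_const.mul (continuous_pow _)
  have hγ1 : γ 1 = fun _ => x := by funext j; simp [hγ]
  have lim1 : Tendsto (fun t => G (γ t)) (nhdsWithin 1 (Set.Ioi (1:ℝ))) (nhds (G fun _ => x)) := by
    have h := ((hGc.comp hγc).tendsto 1).mono_left (nhdsWithin_le_nhds (s := Set.Ioi (1:ℝ)))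
    rw [Function.comp, hγ1] at h
    exact h
  have hinj : ∀ t : ℝ, 1 < t → Function.Injective (γ t) := by
    intro t ht a b hab
    have h2 : t ^ (a : ℕ) = t ^ (b : ℕ) := mul_left_cancel₀ hx hab
    exact Fin.ext ((pow_right_strictMono₀ ht).injective h2)
  -- limit of the explicit product
  set L : ℝ := (∏ i, x ^ e i) * ∏ i : Fin n, ∏ j ∈ Finset.Ioi i,
      (((e j : ℝ) - (e i : ℝ)) / (x * ((i : ℕ) : ℝ) - x * ((j : ℕ) : ℝ))) with hL
  have limH : Tendsto (fun t : ℝ => (∏ i, x ^ e i) * ∏ i : Fin n, ∏ j ∈ Finset.Ioi i,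
      ((t ^ e j - t ^ e i) / (x * t ^ (i : ℕ) - x * t ^ (j : ℕ))))
      (nhdsWithin 1 {t : ℝ | t ≠ 1}) (nhds L) := by
    apply Tendsto.const_mul
    apply tendsto_finset_prod
    intro i _
    apply tendsto_finset_prod
    intro j hj
    have hij : i < j := Finset.mem_Ioi.1 hj
    have hij' : (i : ℕ) < (j : ℕ) := hij
    exact my_tendsto_pair (e j) (e i) i j x hx (by exact_mod_cast hij'.ne)
  have hGγ : ∀ t ∈ Set.Ioi (1 : ℝ), G (γ t) = (∏ i, x ^ e i) * ∏ i : Fin n, ∏ j ∈ Finset.Ioi i,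
      ((t ^ e j - t ^ e i) / (x * t ^ (i : ℕ) - x * t ^ (j : ℕ))) := by
    intro t ht
    rw [← hFeqG (γ t) (hinj t ht)]
    have hdet : Matrix.det (Matrix.of fun i j : Fin n => (γ t) j ^ (f i + (n - 1 - (i : ℕ))))
        = (∏ i, x ^ e i) * ∏ i : Fin n, ∏ j ∈ Finset.Ioi i, (t ^ e j - t ^ e i) := by
      have h1 : (Matrix.of fun i j : Fin n => (γ t) j ^ (f i + (n - 1 - (i : ℕ))))
          = Matrix.of fun i j : Fin n =>
              x ^ e i * (Matrix.vandermonde (fun i => t ^ e i)) i j := by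
        ext i j
        simp only [Matrix.of_apply, Matrix.vandermonde_apply, hγ, hef]
        ring
      rw [h1, Matrix.det_mul_column, Matrix.det_vandermonde]
    have hden : (∏ p ∈ Finset.univ.filter (fun p : Fin n × Fin n => p.1 < p.2),
        ((γ t) p.1 - (γ t) p.2))
        = ∏ i : Fin n, ∏ j ∈ Finset.Ioi i, (x * t ^ (i : ℕ) - x * t ^ (j : ℕ)) := by
      have := my_pairs_prod (fun a b : Fin n => γ t a - γ t b)
      simpa [hγ] using this
    rw [hdet, hden, mul_div_assoc]
    congr 1
    simp only [Finset.prod_div_distrib]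
  have lim2 : Tendsto (fun t => G (γ t)) (nhdsWithin 1 (Set.Ioi (1:ℝ))) (nhds L) := by
    refine (limH.mono_left (nhdsWithin_mono _ fun t ht => ?_)).congr' ?_
    · exact ne_of_gt ht
    · filter_upwards [eventually_mem_nhdsWithin] with t ht
      exact (hGγ t ht).symm
  have hGx : G (fun _ => x) = L := tendsto_nhds_unique lim1 lim2
  -- main tendsto statement
  have main : Tendsto
      (fun y : Fin n → ℝ =>
        (Matrix.det (Matrix.of fun i j : Fin n => y j ^ (f i + (n - 1 - (i : ℕ))))) /
          ∏ p ∈ Finset.univ.filter (fun p : Fin n × Fin n => p.1 < p.2), (y p.1 - y p.2))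
      (nhdsWithin (fun _ => x) {y : Fin n → ℝ | Function.Injective y}) (nhds (G fun _ => x)) := by
    refine ((hGc.tendsto _).mono_left nhdsWithin_le_nhds).congr' ?_
    filter_upwards [eventually_mem_nhdsWithin] with y hy
    exact (hFeqG y hy).symm
  -- identify L with the target constant
  have hTL : x ^ (∑ i, f i) *
        (∏ p ∈ Finset.univ.filter (fun p : Fin n × Fin n => p.1 < p.2),
          (((f p.1 + (n - 1 - (p.1 : ℕ)) : ℕ) : ℝ) - ((f p.2 + (n - 1 - (p.2 : ℕ)) : ℕ) : ℝ))) /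
        (∏ p ∈ Finset.univ.filter (fun p : Fin n × Fin n => p.1 < p.2),
          (((n - 1 - (p.1 : ℕ) : ℕ) : ℝ) - ((n - 1 - (p.2 : ℕ) : ℕ) : ℝ))) = L := by
    have hsub : ∀ i j : Fin n, i < j →
        (((n - 1 - (i : ℕ) : ℕ)) : ℝ) - ((n - 1 - (j : ℕ) : ℕ) : ℝ)
          = ((j : ℕ) : ℝ) - ((i : ℕ) : ℝ) := by
      intro i j hij
      have hi : (i : ℕ) ≤ n - 1 := by have := i.isLt; omega
      have hj' : (j : ℕ) ≤ n - 1 := by have := j.isLt; omega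
      have hij' : (i : ℕ) < (j : ℕ) := hij
      rw [Nat.cast_sub hi, Nat.cast_sub hj']
      have h1 : ((i : ℕ) : ℝ) + 1 ≤ ((n - 1 : ℕ) : ℝ) + 1 := by exact_mod_cast Nat.succ_le_succ hi
      ring
    have hB : (∏ i : Fin n, ∏ j ∈ Finset.Ioi i, (((j : ℕ) : ℝ) - ((i : ℕ) : ℝ))) ≠ 0 := by
      rw [Finset.prod_ne_zero_iff]
      intro i _
      rw [Finset.prod_ne_zero_iff]
      intro j hj
      have h1 : i < j := Finset.mem_Ioi.1 hj
      have h2 : (i : ℕ) < (j : ℕ) := h1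
      have h3 : ((i : ℕ) : ℝ) < ((j : ℕ) : ℝ) := by exact_mod_cast h2
      exact sub_ne_zero.mpr (ne_of_gt h3)
    have hLval : L = x ^ (∑ i, f i) *
        (∏ i : Fin n, ∏ j ∈ Finset.Ioi i, ((e i : ℝ) - (e j : ℝ))) /
        (∏ i : Fin n, ∏ j ∈ Finset.Ioi i, (((j : ℕ) : ℝ) - ((i : ℕ) : ℝ))) := by
      rw [hL]
      rw [Finset.prod_congr rfl (fun i (_ : i ∈ Finset.univ) => Finset.prod_congr rfl
        (fun j hj => show ((e j : ℝ) - (e i : ℝ)) / (x * ((i : ℕ) : ℝ) - x * ((j : ℕ) : ℝ))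
            = ((e i : ℝ) - (e j : ℝ)) / (x * (((j : ℕ) : ℝ) - ((i : ℕ) : ℝ))) from by
          rw [show (e j : ℝ) - (e i : ℝ) = -((e i : ℝ) - (e j : ℝ)) from by ring,
            show x * ((i : ℕ) : ℝ) - x * ((j : ℕ) : ℝ)
              = -(x * (((j : ℕ) : ℝ) - ((i : ℕ) : ℝ))) from by ring, neg_div_neg_eq]))]
      simp only [Finset.prod_div_distrib, Finset.prod_mul_distrib, Finset.prod_const,
        Fin.card_Ioi]
      rw [Finset.prod_pow_eq_pow_sum, Finset.prod_pow_eq_pow_sum]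
      have hsum : ∑ i, e i = (∑ i, f i) + ∑ i : Fin n, (n - 1 - (i : ℕ)) :=
        Finset.sum_add_distrib
      rw [hsum, pow_add]
      have hxK : (x ^ (∑ i : Fin n, (n - 1 - (i : ℕ)))) ≠ 0 := pow_ne_zero _ hx
      field_simp
    rw [hLval]
    simp only [hef]
    rw [my_pairs_prod (fun a b : Fin n => ((e a : ℝ) - (e b : ℝ))),
      my_pairs_prod (fun a b : Fin n =>
        (((n - 1 - (a : ℕ) : ℕ) : ℝ) - ((n - 1 - (b : ℕ) : ℕ) : ℝ)))]
    rw [Finset.prod_congr rfl (fun i (_ : i ∈ Finset.univ) => Finset.prod_congr rfl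
      (fun j hj => hsub i j (Finset.mem_Ioi.1 hj)))]
  rw [hTL, ← hGx]
  exact main
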